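/- Let d ≥ 1 and let α : ℝ^d × ℝ^d → ℝ^d be continuous and satisfy the cocycle identity α(x, v+w) = α(x,v) + α(x+v, w). Suppose there exist λ ≥ 1 and C ≥ 0 with λ⁻¹‖v‖ − C ≤ ‖α(x,v)‖ ≤ λ‖v‖ + C for all x, v ∈ ℝ^d. Then for every r > 0 there exists M > 0 such that for all x ∈ ℝ^d and all v ∈ ℝ^d with ‖v‖ ≥ M, one has ‖r^{−d} ∫_{C_r} α(x+s, v) ds‖ ≥ ‖v‖/(2λ). -/

import Mathlib

open MeasureTheory

/-- `Euc d` is `d`-dimensional Euclidean space. -/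
abbrev Euc (d : ℕ) := EuclideanSpace ℝ (Fin d)

/-- The cube `[-r/2, r/2]^d` in `ℝ^d`. -/
def cube (d : ℕ) (r : ℝ) : Set (Euc d) :=
  {s | ∀ i, s i ∈ Set.Icc (-(r / 2)) (r / 2)}

lemma cube_eq (d : ℕ) (r : ℝ) : cube d r = (MeasurableEquiv.toLp 2 (Fin d → ℝ)).symm ⁻¹'
    (Set.univ.pi fun _ : Fin d => Set.Icc (-(r / 2)) (r / 2)) := by
  ext s
  simp only [cube, Set.mem_setOf_eq, Set.mem_preimage, Set.mem_univ_pi]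
  rfl

lemma cube_vol (d : ℕ) (r : ℝ) (hr : 0 < r) : volume (cube d r) = ENNReal.ofReal (r^d) := by
  rw [cube_eq, (EuclideanSpace.volume_preserving_symm_measurableEquiv_toLp (Fin d)).measure_preimage
    (MeasurableSet.univ_pi fun _ => measurableSet_Icc).nullMeasurableSet,
    volume_pi_pi]
  simp only [Real.volume_Icc, Finset.prod_const, Finset.card_univ, Fintype.card_fin]
  rw [show (r/2 - -(r/2)) = r by ring, ENNReal.ofReal_pow hr.le]

lemma cube_compact (d : ℕ) (r : ℝ) : IsCompact (cube d r) := by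
  rw [cube_eq d r]
  exact (Homeomorph.isCompact_preimage
    (PiLp.continuousLinearEquiv 2 ℝ (fun _ : Fin d => ℝ)).toHomeomorph).2
    (isCompact_univ_pi fun _ => isCompact_Icc)

lemma cube_norm_le (d : ℕ) (r : ℝ) (hr : 0 < r) {s : Euc d} (hs : s ∈ cube d r) :
    ‖s‖ ≤ r * Real.sqrt d := by
  rw [EuclideanSpace.norm_eq]
  calc Real.sqrt (∑ i, ‖s i‖^2) ≤ Real.sqrt (∑ _i : Fin d, r^2) := by
        apply Real.sqrt_le_sqrt
        apply Finset.sum_le_sum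
        intro i _
        have h := hs i
        have : |s i| ≤ r := by
          rw [abs_le]; constructor <;> [linarith [h.1, hr]; linarith [h.2, hr]]
        calc ‖s i‖^2 = |s i|^2 := by rw [Real.norm_eq_abs]
          _ ≤ r^2 := by nlinarith [abs_nonneg (s i)]
    _ = r * Real.sqrt d := by
        rw [Finset.sum_const, Finset.card_univ, Fintype.card_fin, nsmul_eq_mul,
          Real.sqrt_mul (by positivity), Real.sqrt_sq hr.le, mul_comm]

/-- For a continuous cocycle on `ℝ^d` that is bi-Lipschitz at large scale, the cube averages
of `α(·, v)` have norm at least `‖v‖/(2λ)` for all sufficiently long vectors `v`. -/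
theorem cube_average_lower_bound
    (d : ℕ) (hd : 1 ≤ d)
    (α : Euc d → Euc d → Euc d)
    (hαcont : Continuous fun p : Euc d × Euc d => α p.1 p.2)
    (hcoc : ∀ x v w : Euc d, α x (v + w) = α x v + α (x + v) w)
    (lam C : ℝ) (hlam : 1 ≤ lam) (hC : 0 ≤ C)
    (hlow : ∀ x v : Euc d, lam⁻¹ * ‖v‖ - C ≤ ‖α x v‖)
    (hup : ∀ x v : Euc d, ‖α x v‖ ≤ lam * ‖v‖ + C) :
    ∀ r : ℝ, 0 < r → ∃ M : ℝ, 0 < M ∧ ∀ x v : Euc d, M ≤ ‖v‖ →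
      ‖v‖ / (2 * lam) ≤ ‖(r ^ d)⁻¹ • ∫ s in cube d r, α (x + s) v‖ := by
  intro r hr
  have hL : (0:ℝ) < lam := lt_of_lt_of_le one_pos hlam
  set B : ℝ := r * Real.sqrt d with hBdef
  have hB : 0 ≤ B := by positivity
  set K : ℝ := lam * B + C with hKdef
  have hK : 0 ≤ K := by positivity
  refine ⟨2 * lam * (C + 2 * K) + 1, by positivity, ?_⟩
  intro x v hv
  have hrd : (0:ℝ) < r ^ d := by positivity
  have hcompact := cube_compact d r
  have hcont2 : Continuous fun s : Euc d => α (x + s) v :=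
    hαcont.comp ((continuous_const.add continuous_id).prodMk continuous_const)
  have hint : IntegrableOn (fun s => α (x + s) v) (cube d r) volume :=
    hcont2.locallyIntegrable.integrableOn_isCompact hcompact
  have hintc : IntegrableOn (fun _ : Euc d => α x v) (cube d r) volume :=
    integrableOn_const hcompact.measure_lt_top.ne
  have hvol : (volume (cube d r)).toReal = r ^ d := by
    rw [cube_vol d r hr, ENNReal.toReal_ofReal hrd.le]
  -- pointwise bound on the difference
  have hdiff : ∀ s ∈ cube d r, ‖α (x + s) v - α x v‖ ≤ 2 * K := by
    intro s hs
    have h2 : α x (s + v) = α x s + α (x + s) v := hcoc x s v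
    have h1 : α x (s + v) = α x v + α (x + v) s := by rw [add_comm s v]; exact hcoc x v s
    have key : α (x + s) v - α x v = α (x + v) s - α x s := by
      rw [h2] at h1
      rw [sub_eq_sub_iff_add_eq_add, add_comm (α (x + s) v), h1, add_comm]
    rw [key]
    have hs1 := hup (x + v) s
    have hs2 := hup x s
    have hsn : ‖s‖ ≤ B := cube_norm_le d r hr hs
    have := norm_sub_le (α (x + v) s) (α x s)
    nlinarith
  -- split the integral
  have hsplit : (∫ s in cube d r, α (x + s) v) =
      (∫ s in cube d r, (α (x + s) v - α x v)) + (r ^ d) • α x v := by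
    rw [integral_sub hint hintc, setIntegral_const, measureReal_def, hvol]
    abel
  have hDbound : ‖∫ s in cube d r, (α (x + s) v - α x v)‖ ≤ 2 * K * (r ^ d) := by
    calc ‖∫ s in cube d r, (α (x + s) v - α x v)‖
        ≤ 2 * K * (volume (cube d r)).toReal :=
          norm_setIntegral_le_of_norm_le_const hcompact.measure_lt_top hdiff
      _ = 2 * K * (r ^ d) := by rw [hvol]
  have hsm : ‖(r ^ d : ℝ) • α x v‖ = r ^ d * ‖α x v‖ := by
    rw [norm_smul, Real.norm_eq_abs, abs_of_pos hrd]
  have hIlow : (r ^ d) * (‖α x v‖ - 2 * K) ≤ ‖∫ s in cube d r, α (x + s) v‖ := by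
    rw [hsplit]
    have h1 : ‖(r ^ d : ℝ) • α x v‖ ≤
        ‖(∫ s in cube d r, (α (x + s) v - α x v)) + (r ^ d) • α x v‖ +
        ‖∫ s in cube d r, (α (x + s) v - α x v)‖ := by
      calc ‖(r ^ d : ℝ) • α x v‖
          = ‖((∫ s in cube d r, (α (x + s) v - α x v)) + (r ^ d) • α x v) +
            (-(∫ s in cube d r, (α (x + s) v - α x v)))‖ := by congr 1; abel
        _ ≤ ‖(∫ s in cube d r, (α (x + s) v - α x v)) + (r ^ d) • α x v‖ +
            ‖-(∫ s in cube d r, (α (x + s) v - α x v))‖ := norm_add_le _ _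
        _ = _ := by rw [norm_neg]
    have hexp : (r ^ d) * (‖α x v‖ - 2 * K) = r ^ d * ‖α x v‖ - 2 * K * r ^ d := by ring
    linarith [hsm ▸ h1, hDbound]
  rw [norm_smul, Real.norm_eq_abs, abs_of_pos (inv_pos.2 hrd)]
  have hend : ‖v‖ / (2 * lam) ≤ ‖α x v‖ - 2 * K := by
    have hα := hlow x v
    have h2 : C + 2 * K ≤ ‖v‖ / (2 * lam) := by
      rw [le_div_iff₀ (by positivity)]; nlinarith
    have h3 : lam⁻¹ * ‖v‖ = ‖v‖ / (2 * lam) + ‖v‖ / (2 * lam) := by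
      field_simp; ring
    linarith
  calc ‖v‖ / (2 * lam) ≤ ‖α x v‖ - 2 * K := hend
    _ = (r ^ d)⁻¹ * (r ^ d * (‖α x v‖ - 2 * K)) := by field_simp
    _ ≤ (r ^ d)⁻¹ * ‖∫ s in cube d r, α (x + s) v‖ :=
        mul_le_mul_of_nonneg_left hIlow (by positivity)
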